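/- Let m ∈ ℕ, σ > 0 and z ∈ ℝ^m \ {0}. The matrix valued kernel K : ℝ^m × ℝ^m → M₂(ℂ) defined by K(x,y) = [[e^{−σ‖x−y‖²}, e^{−σ‖x+z−y‖²}], [e^{−σ‖x−y−z‖²}, e^{−σ‖x−y‖²}]] is positive definite but not strictly positive definite, while every scalar valued projection K_v, v ∈ ℂ² \ {0}, is a strictly positive definite kernel on ℝ^m. -/

import Mathlib

open scoped ComplexOrder

/-- Complex "inner product" on finite tuples, linear in the first argument and
conjugate-linear in the second: `cip v w = ∑ i, v i * conj (w i)`. -/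
noncomputable def cip {ι : Type*} [Fintype ι] (v w : ι → ℂ) : ℂ :=
  ∑ i, v i * (starRingEnd ℂ) (w i)

/-- A matrix valued kernel is positive definite. -/
def IsPDMat {X : Type*} {ℓ : ℕ} (K : X → X → Matrix (Fin ℓ) (Fin ℓ) ℂ) : Prop :=
  ∀ (n : ℕ) (x : Fin n → X), Function.Injective x →
    ∀ v : Fin n → Fin ℓ → ℂ,
      0 ≤ ∑ μ : Fin n, ∑ ν : Fin n, cip ((K (x μ) (x ν)).mulVec (v μ)) (v ν)

/-- A matrix valued kernel is strictly positive definite. -/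
def IsSPDMat {X : Type*} {ℓ : ℕ} (K : X → X → Matrix (Fin ℓ) (Fin ℓ) ℂ) : Prop :=
  ∀ (n : ℕ) (x : Fin n → X), Function.Injective x →
    ∀ v : Fin n → Fin ℓ → ℂ, (∃ μ, v μ ≠ 0) →
      0 < ∑ μ : Fin n, ∑ ν : Fin n, cip ((K (x μ) (x ν)).mulVec (v μ)) (v ν)

/-- A scalar valued kernel is positive definite. -/
def IsPDKer {X : Type*} (k : X → X → ℂ) : Prop :=
  ∀ (n : ℕ) (x : Fin n → X), Function.Injective x →
    ∀ c : Fin n → ℂ,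
      0 ≤ ∑ μ : Fin n, ∑ ν : Fin n, c μ * (starRingEnd ℂ) (c ν) * k (x μ) (x ν)

/-- A scalar valued kernel is strictly positive definite. -/
def IsSPDKer {X : Type*} (k : X → X → ℂ) : Prop :=
  ∀ (n : ℕ) (x : Fin n → X), Function.Injective x →
    ∀ c : Fin n → ℂ, (∃ μ, c μ ≠ 0) →
      0 < ∑ μ : Fin n, ∑ ν : Fin n, c μ * (starRingEnd ℂ) (c ν) * k (x μ) (x ν)

/-- The scalar valued projection `K_v(x,y) = ⟨K(x,y)v, v⟩` of a matrix valued kernel. -/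
noncomputable def projKer {X : Type*} {ℓ : ℕ} (K : X → X → Matrix (Fin ℓ) (Fin ℓ) ℂ)
    (v : Fin ℓ → ℂ) : X → X → ℂ :=
  fun x y => cip ((K x y).mulVec v) v

/-- The Gaussian-type matrix valued kernel
`K(x,y) = [[e^{-σ‖x-y‖²}, e^{-σ‖x+z-y‖²}], [e^{-σ‖x-y-z‖²}, e^{-σ‖x-y‖²}]]` on `ℝ^m`. -/
noncomputable def Kgauss (m : ℕ) (σ : ℝ) (z : EuclideanSpace ℝ (Fin m)) :
    EuclideanSpace ℝ (Fin m) → EuclideanSpace ℝ (Fin m) → Matrix (Fin 2) (Fin 2) ℂ :=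
  fun x y =>
    !![(Real.exp (-σ * ‖x - y‖ ^ 2) : ℂ), (Real.exp (-σ * ‖x + z - y‖ ^ 2) : ℂ);
       (Real.exp (-σ * ‖x - y - z‖ ^ 2) : ℂ), (Real.exp (-σ * ‖x - y‖ ^ 2) : ℂ)]


section Aux

open Finset

set_option maxHeartbeats 1000000

variable {m : ℕ}

private lemma factor_exp (σ : ℝ) (a b : EuclideanSpace ℝ (Fin m)) :
    ((Real.exp (-σ * ‖a - b‖ ^ 2) : ℝ) : ℂ) =
      ((Real.exp (-σ * ‖a‖ ^ 2) : ℝ) : ℂ) * ((Real.exp (-σ * ‖b‖ ^ 2) : ℝ) : ℂ) *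
        Complex.exp ((2 * σ * (inner ℝ a b : ℝ) : ℝ) : ℂ) := by
  have h : -σ * ‖a - b‖ ^ 2 =
      (-σ * ‖a‖ ^ 2) + (-σ * ‖b‖ ^ 2) + (2 * σ * (inner ℝ a b : ℝ)) := by
    rw [norm_sub_sq_real]; ring
  rw [h, Real.exp_add, Real.exp_add, ← Complex.ofReal_exp]
  push_cast
  ring

private lemma inner_eval (a b : EuclideanSpace ℝ (Fin m)) :
    ((inner ℝ a b : ℝ) : ℂ) = ∑ i, ((a i : ℝ) : ℂ) * ((b i : ℝ) : ℂ) := by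
  have : (inner ℝ a b : ℝ) = ∑ i, a i * b i := by
    simp [PiLp.inner_apply, RCLike.inner_apply, starRingEnd_apply, star_trivial]
    exact Finset.sum_congr rfl fun _ _ => mul_comm _ _
  rw [this]
  push_cast
  rfl

private lemma swap_identity (σ : ℝ) {ι : Type} [Fintype ι]
    (p : ι → EuclideanSpace ℝ (Fin m)) (d : ι → ℂ) (k : ℕ) :
    ∑ μ, ∑ ν, d μ * (starRingEnd ℂ) (d ν) *
        ((((2 * σ * (inner ℝ (p μ) (p ν) : ℝ)) : ℝ) : ℂ) ^ k / (k.factorial : ℂ)) =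
      (((2 * σ) ^ k / k.factorial : ℝ) : ℂ) *
        ∑ f ∈ Fintype.piFinset (fun _ : Fin k => (univ : Finset (Fin m))),
          ((Complex.normSq (∑ μ, d μ * ∏ j, ((p μ (f j) : ℝ) : ℂ)) : ℝ) : ℂ) := by
  have pow_eq : ∀ (μ ν : ι), (((inner ℝ (p μ) (p ν) : ℝ) : ℂ)) ^ k =
      ∑ f ∈ Fintype.piFinset (fun _ : Fin k => (univ : Finset (Fin m))),
        (∏ j, ((p μ (f j) : ℝ) : ℂ)) * (∏ j, ((p ν (f j) : ℝ) : ℂ)) := by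
    intro μ ν
    rw [inner_eval]
    rw [show (∑ i, ((p μ i : ℝ) : ℂ) * ((p ν i : ℝ) : ℂ)) ^ k
        = ∏ _j : Fin k, (∑ i, ((p μ i : ℝ) : ℂ) * ((p ν i : ℝ) : ℂ)) by
      rw [Finset.prod_const, Finset.card_univ, Fintype.card_fin]]
    rw [Finset.prod_univ_sum]
    exact Finset.sum_congr rfl fun f _ => by rw [← Finset.prod_mul_distrib]
  calc ∑ μ, ∑ ν, d μ * (starRingEnd ℂ) (d ν) *
        ((((2 * σ * (inner ℝ (p μ) (p ν) : ℝ)) : ℝ) : ℂ) ^ k / (k.factorial : ℂ))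
      = ∑ μ, ∑ ν, (((2 * σ) ^ k / k.factorial : ℝ) : ℂ) *
          ((d μ * ∑ f ∈ Fintype.piFinset (fun _ : Fin k => (univ : Finset (Fin m))),
            (∏ j, ((p μ (f j) : ℝ) : ℂ)) * (∏ j, ((p ν (f j) : ℝ) : ℂ))) * (starRingEnd ℂ) (d ν)) := by
        refine Finset.sum_congr rfl fun μ _ => Finset.sum_congr rfl fun ν _ => ?_
        rw [← pow_eq]
        push_cast
        ring
    _ = (((2 * σ) ^ k / k.factorial : ℝ) : ℂ) * ∑ μ, ∑ ν,
          ((d μ * ∑ f ∈ Fintype.piFinset (fun _ : Fin k => (univ : Finset (Fin m))),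
            (∏ j, ((p μ (f j) : ℝ) : ℂ)) * (∏ j, ((p ν (f j) : ℝ) : ℂ))) * (starRingEnd ℂ) (d ν)) := by
        rw [Finset.mul_sum]; exact Finset.sum_congr rfl fun μ _ => (Finset.mul_sum _ _ _).symm
    _ = (((2 * σ) ^ k / k.factorial : ℝ) : ℂ) *
        ∑ f ∈ Fintype.piFinset (fun _ : Fin k => (univ : Finset (Fin m))),
          ((Complex.normSq (∑ μ, d μ * ∏ j, ((p μ (f j) : ℝ) : ℂ)) : ℝ) : ℂ) := by
        congr 1
        have conj_eq : ∀ f : Fin k → Fin m,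
            (∑ ν, (starRingEnd ℂ) (d ν) * ∏ j, ((p ν (f j) : ℝ) : ℂ))
              = (starRingEnd ℂ) (∑ ν, d ν * ∏ j, ((p ν (f j) : ℝ) : ℂ)) := by
          intro f
          rw [map_sum]
          refine Finset.sum_congr rfl fun ν _ => ?_
          rw [map_mul]
          congr 1
          rw [← Complex.ofReal_prod, Complex.conj_ofReal, Complex.ofReal_prod]
        have step1 : ∑ μ, ∑ ν, ((d μ * ∑ f ∈ Fintype.piFinset (fun _ : Fin k => (univ : Finset (Fin m))),
            (∏ j, ((p μ (f j) : ℝ) : ℂ)) * (∏ j, ((p ν (f j) : ℝ) : ℂ))) * (starRingEnd ℂ) (d ν))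
            = ∑ f ∈ Fintype.piFinset (fun _ : Fin k => (univ : Finset (Fin m))),
              (∑ μ, d μ * ∏ j, ((p μ (f j) : ℝ) : ℂ)) *
                (∑ ν, (starRingEnd ℂ) (d ν) * ∏ j, ((p ν (f j) : ℝ) : ℂ)) := by
          calc ∑ μ, ∑ ν, ((d μ * ∑ f ∈ Fintype.piFinset (fun _ : Fin k => (univ : Finset (Fin m))),
                (∏ j, ((p μ (f j) : ℝ) : ℂ)) * (∏ j, ((p ν (f j) : ℝ) : ℂ))) * (starRingEnd ℂ) (d ν))
              = ∑ μ, ∑ ν, ∑ f ∈ Fintype.piFinset (fun _ : Fin k => (univ : Finset (Fin m))),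
                (d μ * ∏ j, ((p μ (f j) : ℝ) : ℂ)) * ((starRingEnd ℂ) (d ν) * ∏ j, ((p ν (f j) : ℝ) : ℂ)) := by
                refine Finset.sum_congr rfl fun μ _ => Finset.sum_congr rfl fun ν _ => ?_
                rw [Finset.mul_sum, Finset.sum_mul]
                exact Finset.sum_congr rfl fun f _ => by ring
            _ = ∑ μ, ∑ f ∈ Fintype.piFinset (fun _ : Fin k => (univ : Finset (Fin m))), ∑ ν,
                (d μ * ∏ j, ((p μ (f j) : ℝ) : ℂ)) * ((starRingEnd ℂ) (d ν) * ∏ j, ((p ν (f j) : ℝ) : ℂ)) :=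
                Finset.sum_congr rfl fun μ _ => Finset.sum_comm
            _ = ∑ f ∈ Fintype.piFinset (fun _ : Fin k => (univ : Finset (Fin m))), ∑ μ, ∑ ν,
                (d μ * ∏ j, ((p μ (f j) : ℝ) : ℂ)) * ((starRingEnd ℂ) (d ν) * ∏ j, ((p ν (f j) : ℝ) : ℂ)) :=
                Finset.sum_comm
            _ = _ := Finset.sum_congr rfl fun f _ => (Finset.sum_mul_sum _ _ _ _).symm
        rw [step1]
        refine Finset.sum_congr rfl fun f _ => ?_
        rw [conj_eq f, Complex.mul_conj]

private lemma gauss_hasSum (σ : ℝ) {ι : Type} [Fintype ι]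
    (p : ι → EuclideanSpace ℝ (Fin m)) (c : ι → ℂ) :
    HasSum (fun k : ℕ =>
      (((2 * σ) ^ k / k.factorial : ℝ) : ℂ) *
        ∑ f ∈ Fintype.piFinset (fun _ : Fin k => (univ : Finset (Fin m))),
          ((Complex.normSq (∑ μ, (c μ * ((Real.exp (-σ * ‖p μ‖ ^ 2) : ℝ) : ℂ)) *
              ∏ j, ((p μ (f j) : ℝ) : ℂ)) : ℝ) : ℂ))
      (∑ μ, ∑ ν, c μ * (starRingEnd ℂ) (c ν) * ((Real.exp (-σ * ‖p μ - p ν‖ ^ 2) : ℝ) : ℂ)) := by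
  set d : ι → ℂ := fun μ => c μ * ((Real.exp (-σ * ‖p μ‖ ^ 2) : ℝ) : ℂ) with hd
  have base : ∀ μ ν : ι, HasSum
      (fun k : ℕ => d μ * (starRingEnd ℂ) (d ν) *
        ((((2 * σ * (inner ℝ (p μ) (p ν) : ℝ)) : ℝ) : ℂ) ^ k / (k.factorial : ℂ)))
      (c μ * (starRingEnd ℂ) (c ν) * ((Real.exp (-σ * ‖p μ - p ν‖ ^ 2) : ℝ) : ℂ)) := by
    intro μ ν
    have h1 : HasSum (fun k : ℕ => (((2 * σ * (inner ℝ (p μ) (p ν) : ℝ) : ℝ) : ℂ)) ^ k / (k.factorial : ℂ))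
        (Complex.exp ((2 * σ * (inner ℝ (p μ) (p ν) : ℝ) : ℝ) : ℂ)) := by
      rw [Complex.exp_eq_exp_ℂ]
      exact NormedSpace.expSeries_div_hasSum_exp _
    have h2 := h1.mul_left (d μ * (starRingEnd ℂ) (d ν))
    convert h2 using 1
    · rfl
    rw [factor_exp σ (p μ) (p ν), hd]
    simp only []
    rw [map_mul]
    rw [show (starRingEnd ℂ) (((Real.exp (-σ * ‖p ν‖ ^ 2) : ℝ) : ℂ)) = ((Real.exp (-σ * ‖p ν‖ ^ 2) : ℝ) : ℂ)
      from Complex.conj_ofReal _]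
    ring
  have H := hasSum_sum (s := (univ : Finset ι))
    (f := fun μ (k : ℕ) => ∑ ν, d μ * (starRingEnd ℂ) (d ν) *
        ((((2 * σ * (inner ℝ (p μ) (p ν) : ℝ)) : ℝ) : ℂ) ^ k / (k.factorial : ℂ)))
    (a := fun μ => ∑ ν, c μ * (starRingEnd ℂ) (c ν) * ((Real.exp (-σ * ‖p μ - p ν‖ ^ 2) : ℝ) : ℂ))
    (fun μ _ => hasSum_sum (fun ν _ => base μ ν))
  have eq : (fun k : ℕ => ∑ μ, ∑ ν, d μ * (starRingEnd ℂ) (d ν) *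
        ((((2 * σ * (inner ℝ (p μ) (p ν) : ℝ)) : ℝ) : ℂ) ^ k / (k.factorial : ℂ)))
      = fun k : ℕ => (((2 * σ) ^ k / k.factorial : ℝ) : ℂ) *
        ∑ f ∈ Fintype.piFinset (fun _ : Fin k => (univ : Finset (Fin m))),
          ((Complex.normSq (∑ μ, d μ * ∏ j, ((p μ (f j) : ℝ) : ℂ)) : ℝ) : ℂ) :=
    funext fun k => swap_identity σ p d k
  rw [← eq]
  exact H

private lemma gauss_core (σ : ℝ) (hσ : 0 < σ) {ι : Type} [Fintype ι]
    (p : ι → EuclideanSpace ℝ (Fin m)) (c : ι → ℂ) :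
    0 ≤ (∑ μ, ∑ ν, c μ * (starRingEnd ℂ) (c ν) * ((Real.exp (-σ * ‖p μ - p ν‖ ^ 2) : ℝ) : ℂ)) ∧
    ((∑ μ, ∑ ν, c μ * (starRingEnd ℂ) (c ν) * ((Real.exp (-σ * ‖p μ - p ν‖ ^ 2) : ℝ) : ℂ)) = 0 →
      ∀ (k : ℕ) (f : Fin k → Fin m),
        (∑ μ, (c μ * ((Real.exp (-σ * ‖p μ‖ ^ 2) : ℝ) : ℂ)) * ∏ j, ((p μ (f j) : ℝ) : ℂ)) = 0) := by
  set S := ∑ μ, ∑ ν, c μ * (starRingEnd ℂ) (c ν) * ((Real.exp (-σ * ‖p μ - p ν‖ ^ 2) : ℝ) : ℂ) with hS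
  set w : ℕ → ℝ := fun k => ((2 * σ) ^ k / k.factorial) *
    ∑ f ∈ Fintype.piFinset (fun _ : Fin k => (univ : Finset (Fin m))),
      Complex.normSq (∑ μ, (c μ * ((Real.exp (-σ * ‖p μ‖ ^ 2) : ℝ) : ℂ)) *
          ∏ j, ((p μ (f j) : ℝ) : ℂ)) with hw
  have H := gauss_hasSum σ p c
  have Hfun : (fun k : ℕ =>
      (((2 * σ) ^ k / k.factorial : ℝ) : ℂ) *
        ∑ f ∈ Fintype.piFinset (fun _ : Fin k => (univ : Finset (Fin m))),
          ((Complex.normSq (∑ μ, (c μ * ((Real.exp (-σ * ‖p μ‖ ^ 2) : ℝ) : ℂ)) *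
              ∏ j, ((p μ (f j) : ℝ) : ℂ)) : ℝ) : ℂ)) = fun k => ((w k : ℝ) : ℂ) := by
    funext k
    rw [hw]
    push_cast
    rfl
  rw [Hfun] at H
  have Hre : HasSum w S.re := by
    have := Complex.hasSum_re H
    simpa only [Complex.ofReal_re] using this
  have Him : S.im = 0 := by
    have := Complex.hasSum_im H
    simp only [Complex.ofReal_im] at this
    exact this.unique hasSum_zero
  have hwnn : ∀ k, 0 ≤ w k := by
    intro k
    apply mul_nonneg
    · positivity
    · exact Finset.sum_nonneg fun f _ => Complex.normSq_nonneg _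
  have hSre : 0 ≤ S.re := by
    rw [← Hre.tsum_eq]
    exact tsum_nonneg hwnn
  constructor
  · rw [Complex.le_def]
    simpa using ⟨hSre, Him.symm⟩
  · intro hS0 k f
    have hre0 : S.re = 0 := by rw [hS0]; simp
    have hwk0 : w k = 0 := by
      have hle : w k ≤ ∑' k, w k := Summable.le_tsum Hre.summable k (fun j _ => hwnn j)
      rw [Hre.tsum_eq, hre0] at hle
      exact le_antisymm hle (hwnn k)
    have hsum0 : ∑ f ∈ Fintype.piFinset (fun _ : Fin k => (univ : Finset (Fin m))),
        Complex.normSq (∑ μ, (c μ * ((Real.exp (-σ * ‖p μ‖ ^ 2) : ℝ) : ℂ)) *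
          ∏ j, ((p μ (f j) : ℝ) : ℂ)) = 0 := by
      have hpos : 0 < (2 * σ) ^ k / (k.factorial : ℝ) := by positivity
      rw [hw] at hwk0
      exact (mul_eq_zero.mp hwk0).resolve_left (ne_of_gt hpos)
    have hf : f ∈ Fintype.piFinset (fun _ : Fin k => (univ : Finset (Fin m))) := by
      simp [Fintype.mem_piFinset]
    have := (Finset.sum_eq_zero_iff_of_nonneg (fun g _ => Complex.normSq_nonneg _)).mp hsum0 f hf
    exact Complex.normSq_eq_zero.mp this

private lemma affine_vanish {ι : Type} [Fintype ι]
    (p : ι → EuclideanSpace ℝ (Fin m)) (d : ι → ℂ) (q : EuclideanSpace ℝ (Fin m))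
    (h : ∀ (k : ℕ) (f : Fin k → Fin m), (∑ μ, d μ * ∏ j, ((p μ (f j) : ℝ) : ℂ)) = 0) :
    ∀ (s : Finset (EuclideanSpace ℝ (Fin m))) (k : ℕ) (f : Fin k → Fin m),
      ∑ μ, d μ * (∏ j, ((p μ (f j) : ℝ) : ℂ)) *
        ∏ x ∈ s, (((inner ℝ (p μ - x) (q - x) : ℝ) : ℝ) : ℂ) = 0 := by
  classical
  intro s
  induction s using Finset.induction_on with
  | empty =>
    intro k f
    simp only [Finset.prod_empty, mul_one]
    exact h k f
  | insert x₀ s' hx ih =>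
    intro k f
    have expand : ∀ μ : ι, ((inner ℝ (p μ - x₀) (q - x₀) : ℝ) : ℂ)
        = (∑ i, ((p μ i : ℝ) : ℂ) * (((q - x₀) i : ℝ) : ℂ)) - ((inner ℝ x₀ (q - x₀) : ℝ) : ℂ) := by
      intro μ
      have : (inner ℝ (p μ - x₀) (q - x₀) : ℝ)
          = (∑ i, p μ i * (q - x₀) i) - (inner ℝ x₀ (q - x₀) : ℝ) := by
        rw [inner_sub_left]
        simp [PiLp.inner_apply, RCLike.inner_apply, starRingEnd_apply, star_trivial]
        exact Finset.sum_congr rfl fun _ _ => mul_comm _ _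
      rw [this]
      push_cast
      rfl
    calc ∑ μ, d μ * (∏ j, ((p μ (f j) : ℝ) : ℂ)) *
          ∏ x ∈ insert x₀ s', (((inner ℝ (p μ - x) (q - x) : ℝ) : ℝ) : ℂ)
        = ∑ μ, ((∑ i, (((q - x₀) i : ℝ) : ℂ) *
            (d μ * (∏ j, ((p μ ((Fin.cons i f : Fin (k+1) → Fin m) j) : ℝ) : ℂ)) *
              ∏ x ∈ s', (((inner ℝ (p μ - x) (q - x) : ℝ) : ℝ) : ℂ)))
          - ((inner ℝ x₀ (q - x₀) : ℝ) : ℂ) *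
            (d μ * (∏ j, ((p μ (f j) : ℝ) : ℂ)) *
              ∏ x ∈ s', (((inner ℝ (p μ - x) (q - x) : ℝ) : ℝ) : ℂ))) := by
          refine Finset.sum_congr rfl fun μ _ => ?_
          have hcons : ∀ i : Fin m, (∏ j, ((p μ ((Fin.cons i f : Fin (k+1) → Fin m) j) : ℝ) : ℂ))
              = ((p μ i : ℝ) : ℂ) * ∏ j, ((p μ (f j) : ℝ) : ℂ) := by
            intro i
            rw [Fin.prod_univ_succ]
            exact congrArg _ (Finset.prod_congr rfl fun j _ => by rw [Fin.cons_succ])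
          rw [Finset.prod_insert hx, expand μ]
          simp only [Fin.prod_cons, sub_mul, mul_sub, Finset.sum_mul, Finset.mul_sum]
          congr 1
          · refine Finset.sum_congr rfl fun i _ => ?_
            rw [hcons i]
            ring
          · ring
      _ = (∑ i, (((q - x₀) i : ℝ) : ℂ) *
            (∑ μ, d μ * (∏ j, ((p μ ((Fin.cons i f : Fin (k+1) → Fin m) j) : ℝ) : ℂ)) *
              ∏ x ∈ s', (((inner ℝ (p μ - x) (q - x) : ℝ) : ℝ) : ℂ)))
          - ((inner ℝ x₀ (q - x₀) : ℝ) : ℂ) *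
            (∑ μ, d μ * (∏ j, ((p μ (f j) : ℝ) : ℂ)) *
              ∏ x ∈ s', (((inner ℝ (p μ - x) (q - x) : ℝ) : ℝ) : ℂ)) := by
          rw [Finset.sum_sub_distrib]
          congr 1
          · rw [Finset.sum_comm]
            exact Finset.sum_congr rfl fun i _ => (Finset.mul_sum _ _ _).symm
          · exact (Finset.mul_sum _ _ _).symm
      _ = 0 := by
          rw [ih k f, mul_zero, sub_zero]
          exact Finset.sum_eq_zero fun i _ => by
            rw [ih (k+1) (Fin.cons i f), mul_zero]

open scoped Classical in
private lemma gauss_fiber (σ : ℝ) (hσ : 0 < σ) {ι : Type} [Fintype ι]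
    (p : ι → EuclideanSpace ℝ (Fin m)) (c : ι → ℂ)
    (h0 : (∑ μ, ∑ ν, c μ * (starRingEnd ℂ) (c ν) * ((Real.exp (-σ * ‖p μ - p ν‖ ^ 2) : ℝ) : ℂ)) = 0)
    (t₀ : ι) :
    ∑ t ∈ univ.filter (fun t => p t = p t₀), c t = 0 := by
  set d : ι → ℂ := fun μ => c μ * ((Real.exp (-σ * ‖p μ‖ ^ 2) : ℝ) : ℂ) with hd
  have hmono := (gauss_core σ hσ p c).2 h0
  set q := p t₀ with hq
  set s : Finset (EuclideanSpace ℝ (Fin m)) := (univ.image p).erase q with hs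
  have key := affine_vanish p d q hmono s 0 (fun i => i.elim0)
  simp only [Finset.univ_eq_empty, Finset.prod_empty, mul_one] at key
  -- key : ∑ μ, d μ * 1 * ∏ x ∈ s, ↑⟪p μ - x, q - x⟫ = 0  (Fin 0 product is 1)
  have key2 : ∑ μ, d μ * ∏ x ∈ s, (((inner ℝ (p μ - x) (q - x) : ℝ) : ℝ) : ℂ) = 0 := by
    rw [← key]
  have hsplit := Finset.sum_filter_add_sum_filter_not univ (fun t => p t = q)
    (fun μ => d μ * ∏ x ∈ s, (((inner ℝ (p μ - x) (q - x) : ℝ) : ℝ) : ℂ))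
  have hnot : ∑ μ ∈ univ.filter (fun t => ¬ p t = q),
      d μ * ∏ x ∈ s, (((inner ℝ (p μ - x) (q - x) : ℝ) : ℝ) : ℂ) = 0 := by
    refine Finset.sum_eq_zero fun μ hμ => ?_
    rw [Finset.mem_filter] at hμ
    have hmem : p μ ∈ s := by
      rw [hs, Finset.mem_erase]
      exact ⟨hμ.2, Finset.mem_image_of_mem p (Finset.mem_univ μ)⟩
    have : (((inner ℝ (p μ - p μ) (q - p μ) : ℝ) : ℝ) : ℂ) = 0 := by
      simp
    rw [Finset.prod_eq_zero hmem this, mul_zero]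
  set W : ℂ := ∏ x ∈ s, (((inner ℝ (q - x) (q - x) : ℝ) : ℝ) : ℂ) with hW
  have hyes : ∑ μ ∈ univ.filter (fun t => p t = q),
      d μ * ∏ x ∈ s, (((inner ℝ (p μ - x) (q - x) : ℝ) : ℝ) : ℂ)
      = (∑ μ ∈ univ.filter (fun t => p t = q), c μ) * ((Real.exp (-σ * ‖q‖ ^ 2) : ℝ) : ℂ) * W := by
    rw [Finset.sum_mul, Finset.sum_mul]
    refine Finset.sum_congr rfl fun μ hμ => ?_
    rw [Finset.mem_filter] at hμ
    rw [hd]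
    simp only []
    rw [hμ.2]
  have hWne : W ≠ 0 := by
    rw [hW]
    refine Finset.prod_ne_zero_iff.mpr fun x hx => ?_
    have hxq : x ≠ q := by
      rw [hs] at hx
      exact (Finset.mem_erase.mp hx).1
    have : (0 : ℝ) < (inner ℝ (q - x) (q - x) : ℝ) := by
      rw [real_inner_self_eq_norm_sq]
      have hne : q - x ≠ 0 := sub_ne_zero_of_ne (Ne.symm hxq)
      have : 0 < ‖q - x‖ := norm_pos_iff.mpr hne
      positivity
    exact_mod_cast ne_of_gt this
  have hexpne : ((Real.exp (-σ * ‖q‖ ^ 2) : ℝ) : ℂ) ≠ 0 := by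
    exact_mod_cast Real.exp_ne_zero _
  have : (∑ μ ∈ univ.filter (fun t => p t = q), c μ) * ((Real.exp (-σ * ‖q‖ ^ 2) : ℝ) : ℂ) * W = 0 := by
    rw [← hyes]
    have := hsplit.trans key2
    linear_combination this - hnot
  rcases mul_eq_zero.mp this with h | h
  · rcases mul_eq_zero.mp h with h' | h'
    · exact h'
    · exact absurd h' hexpne
  · exact absurd h hWne

open scoped Classical in
private lemma chain_vanish {m n : ℕ} (z : EuclideanSpace ℝ (Fin m)) (hz : z ≠ 0)
    (x : Fin n → EuclideanSpace ℝ (Fin m)) (hx : Function.Injective x)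
    (c : Fin n → ℂ) (v : Fin 2 → ℂ) (hv : v ≠ 0)
    (hfib : ∀ t₀ : Fin n × Fin 2,
      ∑ t ∈ Finset.univ.filter (fun t : Fin n × Fin 2 =>
        x t.1 + (t.2 : ℕ) • z = x t₀.1 + ((t₀.2 : ℕ)) • z), c t.1 * v t.2 = 0) :
    ∀ μ, c μ = 0 := by
  have eq1 : ∀ μ : Fin n,
      c μ * v 0 + (∑ ν, if x ν + z = x μ then c ν * v 1 else 0) = 0 := by
    intro μ
    have h := hfib (μ, 0)
    rw [Finset.sum_filter, Fintype.sum_prod_type] at h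
    simp only [Fin.sum_univ_two, Fin.val_zero, Fin.val_one, zero_smul, one_smul,
      add_zero] at h
    rw [Finset.sum_add_distrib] at h
    have hfirst : (∑ ν, if x ν = x μ then c ν * v 0 else 0) = c μ * v 0 := by
      rw [Finset.sum_eq_single μ]
      · rw [if_pos rfl]
      · intro ν _ hνμ; exact if_neg (fun hc => hνμ (hx hc))
      · intro hμ; exact absurd (Finset.mem_univ μ) hμ
    rwa [hfirst] at h
  have eq2 : ∀ μ : Fin n,
      (∑ ν, if x ν = x μ + z then c ν * v 0 else 0) + c μ * v 1 = 0 := by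
    intro μ
    have h := hfib (μ, 1)
    rw [Finset.sum_filter, Fintype.sum_prod_type] at h
    simp only [Fin.sum_univ_two, Fin.val_zero, Fin.val_one, zero_smul, one_smul,
      add_zero] at h
    rw [Finset.sum_add_distrib] at h
    have hsecond : (∑ ν, if x ν + z = x μ + z then c ν * v 1 else 0) = c μ * v 1 := by
      rw [Finset.sum_eq_single μ]
      · rw [if_pos rfl]
      · intro ν _ hνμ; exact if_neg (fun hc => hνμ (hx (add_right_cancel hc)))
      · intro hμ; exact absurd (Finset.mem_univ μ) hμ
    rwa [hsecond] at h
  by_cases hv0 : v 0 = 0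
  · have hv1 : v 1 ≠ 0 := by
      intro hv1
      apply hv
      funext i
      fin_cases i
      · exact hv0
      · exact hv1
    intro μ
    have h := eq2 μ
    have hzero : (∑ ν, if x ν = x μ + z then c ν * v 0 else 0) = 0 :=
      Finset.sum_eq_zero fun ν _ => by rw [hv0, mul_zero, ite_self]
    rw [hzero, zero_add] at h
    exact (mul_eq_zero.mp h).resolve_right hv1
  · set A : Fin n → Finset (Fin n) :=
      fun μ => Finset.univ.filter (fun ν => ∃ k : ℕ, k ≠ 0 ∧ x ν + k • z = x μ) with hA
    have noPred : ∀ μ : Fin n, (¬ ∃ ν, x ν + z = x μ) → c μ = 0 := by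
      intro μ hT
      have h := eq1 μ
      have hzero : (∑ ν, if x ν + z = x μ then c ν * v 1 else 0) = 0 :=
        Finset.sum_eq_zero fun ν _ => if_neg (fun hc => hT ⟨ν, hc⟩)
      rw [hzero, add_zero] at h
      exact (mul_eq_zero.mp h).resolve_right hv0
    have main : ∀ N : ℕ, ∀ μ : Fin n, (A μ).card ≤ N → c μ = 0 := by
      intro N
      induction N with
      | zero =>
        intro μ hcard
        by_cases hT : ∃ ν, x ν + z = x μ
        · obtain ⟨ν₁, hν₁⟩ := hT
          have hmem : ν₁ ∈ A μ := Finset.mem_filter.mpr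
            ⟨Finset.mem_univ _, 1, one_ne_zero, by rwa [one_smul]⟩
          have := Finset.card_pos.mpr ⟨ν₁, hmem⟩
          omega
        · exact noPred μ hT
      | succ N ih =>
        intro μ hcard
        by_cases hT : ∃ ν, x ν + z = x μ
        · obtain ⟨ν₁, hν₁⟩ := hT
          have hsum : (∑ ν, if x ν + z = x μ then c ν * v 1 else 0) = c ν₁ * v 1 := by
            rw [Finset.sum_eq_single ν₁]
            · rw [if_pos hν₁]
            · intro ν _ hνν₁
              exact if_neg (fun hc => hνν₁ (hx (add_right_cancel (hc.trans hν₁.symm))))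
            · intro hμ; exact absurd (Finset.mem_univ ν₁) hμ
          have hsub : A ν₁ ⊆ A μ := by
            intro ρ hρ
            rw [hA, Finset.mem_filter] at hρ ⊢
            obtain ⟨_, k, hk0, hkz⟩ := hρ
            exact ⟨Finset.mem_univ _, k + 1, Nat.succ_ne_zero _, by
              rw [succ_nsmul, ← add_assoc, hkz, hν₁]⟩
          have hmem : ν₁ ∈ A μ := Finset.mem_filter.mpr
            ⟨Finset.mem_univ _, 1, one_ne_zero, by rwa [one_smul]⟩
          have hnot : ν₁ ∉ A ν₁ := by
            rw [hA, Finset.mem_filter]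
            rintro ⟨-, k, hk0, hkz⟩
            have hzz : (k : ℕ) • z = 0 := by
              have := hkz
              nth_rewrite 2 [← add_zero (x ν₁)] at this
              exact add_left_cancel this
            rw [← Nat.cast_smul_eq_nsmul ℝ] at hzz
            rcases smul_eq_zero.mp hzz with h | h
            · exact hk0 (Nat.cast_eq_zero.mp h)
            · exact hz h
          have hlt : (A ν₁).card < (A μ).card :=
            Finset.card_lt_card ((Finset.ssubset_iff_of_subset hsub).mpr ⟨ν₁, hmem, hnot⟩)
          have hc1 : c ν₁ = 0 := ih ν₁ (by omega)
          have h := eq1 μ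
          rw [hsum, hc1, zero_mul, add_zero] at h
          exact (mul_eq_zero.mp h).resolve_right hv0
        · exact noPred μ hT
    intro μ
    exact main (A μ).card μ le_rfl

private lemma cip_expand (σ : ℝ) (z : EuclideanSpace ℝ (Fin m))
    (a b : EuclideanSpace ℝ (Fin m)) (u w : Fin 2 → ℂ) :
    cip ((Kgauss m σ z a b).mulVec u) w =
      ∑ j : Fin 2, ∑ i : Fin 2, u j * (starRingEnd ℂ) (w i) *
        ((Real.exp (-σ * ‖(a + (j : ℕ) • z) - (b + (i : ℕ) • z)‖ ^ 2) : ℝ) : ℂ) := by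
  simp only [cip, Kgauss, Matrix.mulVec, dotProduct, Fin.sum_univ_two,
    Matrix.of_apply, Matrix.cons_val', Matrix.cons_val_zero, Matrix.cons_val_one,
    Matrix.head_cons, Matrix.empty_val', Matrix.cons_val_fin_one, Matrix.head_fin_const,
    Fin.val_zero, Fin.val_one, zero_smul, one_smul, add_zero,
    sub_add_eq_sub_sub, sub_zero]
  rw [show a + z - b - z = a - b from by abel]
  ring

private lemma bridge (σ : ℝ) (z : EuclideanSpace ℝ (Fin m)) (n : ℕ)
    (x : Fin n → EuclideanSpace ℝ (Fin m)) (w : Fin n → Fin 2 → ℂ) :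
    ∑ μ, ∑ ν, cip ((Kgauss m σ z (x μ) (x ν)).mulVec (w μ)) (w ν) =
      ∑ t : Fin n × Fin 2, ∑ u : Fin n × Fin 2,
        (fun t : Fin n × Fin 2 => w t.1 t.2) t *
          (starRingEnd ℂ) ((fun t : Fin n × Fin 2 => w t.1 t.2) u) *
          ((Real.exp (-σ * ‖(fun t : Fin n × Fin 2 => x t.1 + (t.2 : ℕ) • z) t -
              (fun t : Fin n × Fin 2 => x t.1 + (t.2 : ℕ) • z) u‖ ^ 2) : ℝ) : ℂ) := by
  rw [Fintype.sum_prod_type]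
  refine Finset.sum_congr rfl fun μ _ => ?_
  calc ∑ ν, cip ((Kgauss m σ z (x μ) (x ν)).mulVec (w μ)) (w ν)
      = ∑ ν, ∑ j : Fin 2, ∑ i : Fin 2, w μ j * (starRingEnd ℂ) (w ν i) *
          ((Real.exp (-σ * ‖(x μ + (j : ℕ) • z) - (x ν + (i : ℕ) • z)‖ ^ 2) : ℝ) : ℂ) :=
        Finset.sum_congr rfl fun ν _ => cip_expand σ z (x μ) (x ν) (w μ) (w ν)
    _ = ∑ j : Fin 2, ∑ ν, ∑ i : Fin 2, w μ j * (starRingEnd ℂ) (w ν i) *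
          ((Real.exp (-σ * ‖(x μ + (j : ℕ) • z) - (x ν + (i : ℕ) • z)‖ ^ 2) : ℝ) : ℂ) :=
        Finset.sum_comm
    _ = _ := Finset.sum_congr rfl fun j _ => by rw [Fintype.sum_prod_type]

end Aux

set_option maxHeartbeats 1000000 in
/-- For `σ > 0` and `z ∈ ℝ^m \ {0}`, the matrix valued kernel
`K(x,y) = [[e^{-σ‖x-y‖²}, e^{-σ‖x+z-y‖²}], [e^{-σ‖x-y-z‖²}, e^{-σ‖x-y‖²}]]` is positive
definite but not strictly positive definite, while every scalar valued projection `K_v`,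
`v ≠ 0`, is strictly positive definite on `ℝ^m`. -/
theorem stmt_18 (m : ℕ) (σ : ℝ) (hσ : 0 < σ)
    (z : EuclideanSpace ℝ (Fin m)) (hz : z ≠ 0) :
    IsPDMat (Kgauss m σ z) ∧
    ¬ IsSPDMat (Kgauss m σ z) ∧
    (∀ v : Fin 2 → ℂ, v ≠ 0 → IsSPDKer (projKer (Kgauss m σ z) v)) := by
  classical
  refine ⟨?_, ?_, ?_⟩
  · -- positive definite
    intro n x hx v
    rw [bridge σ z n x v]
    exact (gauss_core σ hσ (fun t : Fin n × Fin 2 => x t.1 + (t.2 : ℕ) • z)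
      (fun t : Fin n × Fin 2 => v t.1 t.2)).1
  · -- not strictly positive definite
    intro hspd
    have hxinj : Function.Injective (![0, z] : Fin 2 → EuclideanSpace ℝ (Fin m)) := by
      intro a b hab
      fin_cases a <;> fin_cases b <;> simp_all
    set w : Fin 2 → Fin 2 → ℂ := ![![0, 1], ![-1, 0]] with hw
    have hwne : ∃ μ, w μ ≠ 0 := by
      refine ⟨0, fun h => ?_⟩
      have := congrFun h 1
      simp [hw] at this
    have hlt := hspd 2 ![0, z] hxinj w hwne
    have hS : ∑ μ : Fin 2, ∑ ν : Fin 2,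
        cip ((Kgauss m σ z (![0, z] μ) (![0, z] ν)).mulVec (w μ)) (w ν) = 0 := by
      simp only [cip, Kgauss, Matrix.mulVec, dotProduct, Fin.sum_univ_two, hw,
        Matrix.of_apply, Matrix.cons_val', Matrix.cons_val_zero, Matrix.cons_val_one,
        Matrix.head_cons, Matrix.empty_val', Matrix.cons_val_fin_one, Matrix.head_fin_const,
        sub_self, sub_zero, zero_sub, norm_neg, norm_zero, add_sub_cancel_right, map_one,
        map_neg, map_zero]
      ring_nf
    rw [hS] at hlt
    exact absurd hlt (lt_irrefl 0)
  · -- projections strictly positive definite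
    intro v hv n x hx c hc
    have hrw : ∑ μ : Fin n, ∑ ν : Fin n,
        c μ * (starRingEnd ℂ) (c ν) * projKer (Kgauss m σ z) v (x μ) (x ν)
        = ∑ μ : Fin n, ∑ ν : Fin n,
            cip ((Kgauss m σ z (x μ) (x ν)).mulVec (fun j => c μ * v j)) (fun j => c ν * v j) := by
      refine Finset.sum_congr rfl fun μ _ => Finset.sum_congr rfl fun ν _ => ?_
      simp only [projKer, cip, Matrix.mulVec, dotProduct, Fin.sum_univ_two, map_mul]
      ring
    rw [hrw, bridge σ z n x (fun μ j => c μ * v j)]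
    have hnn := (gauss_core σ hσ (fun t : Fin n × Fin 2 => x t.1 + (t.2 : ℕ) • z)
      (fun t : Fin n × Fin 2 => c t.1 * v t.2)).1
    have hne : (∑ t : Fin n × Fin 2, ∑ u : Fin n × Fin 2,
        (fun t : Fin n × Fin 2 => c t.1 * v t.2) t *
          (starRingEnd ℂ) ((fun t : Fin n × Fin 2 => c t.1 * v t.2) u) *
          ((Real.exp (-σ * ‖(fun t : Fin n × Fin 2 => x t.1 + (t.2 : ℕ) • z) t -
              (fun t : Fin n × Fin 2 => x t.1 + (t.2 : ℕ) • z) u‖ ^ 2) : ℝ) : ℂ)) ≠ 0 := by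
      intro h0
      have hfib := fun t₀ : Fin n × Fin 2 =>
        gauss_fiber σ hσ (fun t : Fin n × Fin 2 => x t.1 + (t.2 : ℕ) • z)
          (fun t : Fin n × Fin 2 => c t.1 * v t.2) h0 t₀
      have hall := chain_vanish z hz x hx c v hv hfib
      obtain ⟨μ₀, hμ₀⟩ := hc
      exact hμ₀ (hall μ₀)
    exact lt_of_le_of_ne hnn (Ne.symm hne)
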